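/- Let C be an additive left polycyclic code induced by a binary vector a, identified with its image in R̃_n = F4[x]/⟨x^n − ã(x)⟩ via c ↦ c̃(x) = c_{n−1} + c_{n−2} x + ⋯ + c_0 x^{n−1}, where ã(x) = a_{n−1} + a_{n−2} x + ⋯ + a_0 x^{n−1}. Then there exist binary polynomials g_1, g_2, b of degree less than n such that C is generated as an F2[x]-submodule of R̃_n by α g_1 + g_2 and b, where b is a binary element of C of minimal degree (b = 0 if C has no nonzero binary polynomial), α g_1 + g_2 is a nonbinary element of C with g_1 of minimal degree among binary parts of nonbinary elements of C (zero if C is entirely binary), b divides x^n − ã(x), g_1 divides x^n − ã(x), deg g_2 < deg b when b ≠ 0 and g_2 ≠ 0, and b divides ((x^n − ã(x))/g_1)·g_2 when b ≠ 0 and g_1 ≠ 0. -/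

import Mathlib

open Polynomial

noncomputable section

abbrev F4 : Type := GaloisField 2 2

def IsBin (z : F4) : Prop := z = 0 ∨ z = 1

def IsBinVec {n : ℕ} (a : Fin n → F4) : Prop := ∀ i, IsBin (a i)

def IsBinPoly (p : Polynomial F4) : Prop := ∀ i, IsBin (p.coeff i)

def polyOfVec {n : ℕ} (c : Fin n → F4) : Polynomial F4 :=
  ∑ i : Fin n, Polynomial.C (c i) * X ^ (i : ℕ)

def rightShift {n : ℕ} (a c : Fin n → F4) : Fin n → F4 := fun i =>
  (if (i : ℕ) = 0 then 0 else c ⟨(i : ℕ) - 1, lt_of_le_of_lt (Nat.sub_le _ _) i.isLt⟩)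
    + c ⟨n - 1, Nat.sub_lt i.pos Nat.one_pos⟩ * a i

def leftShift {n : ℕ} (a c : Fin n → F4) : Fin n → F4 := fun i =>
  (if h : (i : ℕ) + 1 < n then c ⟨(i : ℕ) + 1, h⟩ else 0) + c ⟨0, i.pos⟩ * a i

def seqShift {n : ℕ} (a c : Fin n → F4) : Fin n → F4 := fun i =>
  if h : (i : ℕ) + 1 < n then c ⟨(i : ℕ) + 1, h⟩ else ∑ j, a j * c j

def IsRightPolycyclic {n : ℕ} (a : Fin n → F4) (C : AddSubgroup (Fin n → F4)) : Prop :=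
  ∀ c ∈ C, rightShift a c ∈ C

def IsLeftPolycyclic {n : ℕ} (a : Fin n → F4) (C : AddSubgroup (Fin n → F4)) : Prop :=
  ∀ c ∈ C, leftShift a c ∈ C

def quotMk {n : ℕ} (a : Fin n → F4) :
    Polynomial F4 →+* Polynomial F4 ⧸ Ideal.span {X ^ n - polyOfVec a} :=
  Ideal.Quotient.mk _

def codeImage {n : ℕ} (a : Fin n → F4) (C : AddSubgroup (Fin n → F4)) :
    Set (Polynomial F4 ⧸ Ideal.span {X ^ n - polyOfVec a}) :=
  (fun c => quotMk a (polyOfVec c)) '' (C : Set (Fin n → F4))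

/-- The reversed polynomial `c̃(x) = c_{n-1} + c_{n-2} x + ⋯ + c_0 x^{n-1}`. -/
def polyOfVecRev {n : ℕ} (c : Fin n → F4) : Polynomial F4 :=
  ∑ i : Fin n, Polynomial.C (c i) * X ^ (n - 1 - (i : ℕ))

def quotMkRev {n : ℕ} (a : Fin n → F4) :
    Polynomial F4 →+* Polynomial F4 ⧸ Ideal.span {X ^ n - polyOfVecRev a} :=
  Ideal.Quotient.mk _

def codeImageRev {n : ℕ} (a : Fin n → F4) (C : AddSubgroup (Fin n → F4)) :
    Set (Polynomial F4 ⧸ Ideal.span {X ^ n - polyOfVecRev a}) :=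
  (fun c => quotMkRev a (polyOfVecRev c)) '' (C : Set (Fin n → F4))

/-! ### Auxiliary material -/

abbrev σ4 : ZMod 2 →+* F4 := algebraMap (ZMod 2) F4

lemma σ4_inj : Function.Injective σ4 := (algebraMap (ZMod 2) F4).injective

lemma φ_inj : Function.Injective (Polynomial.map σ4) :=
  Polynomial.map_injective _ σ4_inj

lemma zmod2_cases (u : ZMod 2) : u = 0 ∨ u = 1 := by revert u; decide

lemma isBin_iff (z : F4) : IsBin z ↔ ∃ u, σ4 u = z := by
  constructor
  · rintro (rfl | rfl)
    · exact ⟨0, map_zero _⟩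
    · exact ⟨1, map_one _⟩
  · rintro ⟨u, rfl⟩
    rcases zmod2_cases u with rfl | rfl
    · exact Or.inl (map_zero _)
    · exact Or.inr (map_one _)

open Classical in
def toBin (z : F4) : ZMod 2 := if z = 1 then 1 else 0

lemma toBin_spec {z : F4} (h : IsBin z) : σ4 (toBin z) = z := by
  rcases h with rfl | rfl
  · have : (0 : F4) ≠ 1 := zero_ne_one
    simp [toBin, this]
  · simp [toBin]

lemma isBinPoly_iff (p : Polynomial F4) :
    IsBinPoly p ↔ ∃ q : Polynomial (ZMod 2), p = q.map σ4 := by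
  constructor
  · intro h
    refine ⟨∑ i ∈ p.support, Polynomial.C (toBin (p.coeff i)) * X ^ i, ?_⟩
    rw [Polynomial.map_sum]
    conv_lhs => rw [p.as_sum_support]
    refine Finset.sum_congr rfl fun i _ => ?_
    rw [Polynomial.map_mul, Polynomial.map_pow, map_C, map_X, toBin_spec (h i),
      C_mul_X_pow_eq_monomial]
  · rintro ⟨q, rfl⟩ i
    rw [isBin_iff]
    exact ⟨q.coeff i, (Polynomial.coeff_map _ _).symm⟩

lemma isBinPoly_map (q : Polynomial (ZMod 2)) : IsBinPoly (q.map σ4) :=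
  (isBinPoly_iff _).2 ⟨q, rfl⟩

lemma degree_mapσ (q : Polynomial (ZMod 2)) : (q.map σ4).degree = q.degree :=
  degree_map_eq_of_injective σ4_inj q

lemma mapσ_eq_zero {q : Polynomial (ZMod 2)} : q.map σ4 = 0 ↔ q = 0 :=
  Polynomial.map_eq_zero_iff σ4_inj

lemma alpha_ne_zero {α : F4} (hα : α ^ 2 + α + 1 = 0) : α ≠ 0 := by
  rintro rfl; simp at hα

lemma two_eq_zero_F4 : (1 : F4) + 1 = 0 := by
  have : CharP F4 2 := inferInstance
  have h := CharP.cast_eq_zero F4 2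
  push_cast at h
  linear_combination h

lemma alpha_ne_one {α : F4} (hα : α ^ 2 + α + 1 = 0) : α ≠ 1 := by
  rintro rfl
  rw [one_pow] at hα
  rw [show (1:F4) + 1 + 1 = (1+1) + 1 by ring, two_eq_zero_F4, zero_add] at hα
  exact one_ne_zero hα

lemma psi_surj {α : F4} (hα : α ^ 2 + α + 1 = 0) :
    Function.Surjective (fun uv : ZMod 2 × ZMod 2 => α * σ4 uv.1 + σ4 uv.2) := by
  have hinj : Function.Injective (fun uv : ZMod 2 × ZMod 2 => α * σ4 uv.1 + σ4 uv.2) := by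
    rintro ⟨u, v⟩ ⟨u', v'⟩ h
    simp only at h
    have hu : u = u' := by
      by_contra hne
      have h1 : u - u' = 1 := by
        rcases zmod2_cases u with rfl | rfl <;> rcases zmod2_cases u' with rfl | rfl <;>
          simp_all <;> decide
      have : α * σ4 (u - u') = σ4 (v' - v) := by
        rw [map_sub, map_sub]; ring_nf; linear_combination h
      rw [h1, map_one, mul_one] at this
      have hb : IsBin α := (isBin_iff α).2 ⟨v' - v, this.symm⟩
      rcases hb with h0 | h1'
      · exact alpha_ne_zero hα h0
      · exact alpha_ne_one hα h1'
    subst hu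
    have hv := σ4_inj (add_left_cancel h)
    simp [hv]
  have hcard : Nat.card (ZMod 2 × ZMod 2) = Nat.card F4 := by
    have := GaloisField.card 2 2 (by norm_num)
    simp [Nat.card_prod, this]
  exact ((Nat.bijective_iff_injective_and_card _).2 ⟨hinj, hcard⟩).2

lemma decomp {α : F4} (hα : α ^ 2 + α + 1 = 0) (p : Polynomial F4) :
    ∃ h1 h2 : Polynomial (ZMod 2),
      p = Polynomial.C α * h1.map σ4 + h2.map σ4 := by
  choose d hd using psi_surj hα
  refine ⟨∑ i ∈ p.support, Polynomial.C ((d (p.coeff i)).1) * X ^ i,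
          ∑ i ∈ p.support, Polynomial.C ((d (p.coeff i)).2) * X ^ i, ?_⟩
  rw [Polynomial.map_sum, Polynomial.map_sum, Finset.mul_sum, ← Finset.sum_add_distrib]
  conv_lhs => rw [p.as_sum_support]
  refine Finset.sum_congr rfl fun i _ => ?_
  rw [← C_mul_X_pow_eq_monomial]
  simp only [Polynomial.map_mul, Polynomial.map_pow, map_C, map_X]
  conv_lhs => rw [← hd (p.coeff i)]
  simp only [map_add, map_mul]
  ring

lemma monic_of_ne_zero_zmod2 {p : Polynomial (ZMod 2)} (hp : p ≠ 0) : p.Monic := by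
  have h := Polynomial.leadingCoeff_ne_zero.2 hp
  rcases zmod2_cases p.leadingCoeff with h0 | h1
  · exact absurd h0 h
  · exact h1

lemma eq_of_dvd_of_degree_le {p q : Polynomial (ZMod 2)} (hq : q ≠ 0)
    (hd : p ∣ q) (hdeg : q.degree ≤ p.degree) : p = q := by
  obtain ⟨r, rfl⟩ := hd
  have hp : p ≠ 0 := fun h => hq (by simp [h])
  have hr : r ≠ 0 := fun h => hq (by simp [h])
  have hdm : (p * r).degree = p.degree + r.degree := degree_mul
  have hrd : r.degree ≤ 0 := by
    by_contra hlt
    push_neg at hlt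
    have h1 : p.degree + 0 < p.degree + r.degree := by
      apply WithBot.add_lt_add_left (degree_ne_bot.2 hp) hlt
    rw [add_zero] at h1
    exact absurd (hdeg.trans_lt (hdm ▸ h1)) (lt_irrefl _)
  have := Polynomial.eq_C_of_degree_le_zero hrd
  have hc : r.coeff 0 ≠ 0 := fun h => hr (by rw [this, h, map_zero])
  rcases zmod2_cases (r.coeff 0) with h0 | h1
  · exact absurd h0 hc
  · rw [this, h1, map_one, mul_one]

lemma coeff_polyOfVecRev {n : ℕ} (c : Fin n → F4) (k : ℕ) :
    (polyOfVecRev c).coeff k = if h : k < n then c ⟨n - 1 - k, by omega⟩ else 0 := by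
  rw [polyOfVecRev, finset_sum_coeff]
  simp only [coeff_C_mul, coeff_X_pow, mul_ite, mul_one, mul_zero]
  split
  · next h =>
    rw [Finset.sum_eq_single (⟨n - 1 - k, by omega⟩ : Fin n)]
    · simp [show n - 1 - (n - 1 - k) = k by omega]
    · intro i _ hne
      rw [if_neg]
      intro heq
      apply hne
      have hi := i.isLt
      apply Fin.ext
      simp only
      omega
    · intro habs
      exact absurd (Finset.mem_univ _) habs
  · next h =>
    apply Finset.sum_eq_zero
    intro i _
    rw [if_neg]
    have := i.isLt
    omega

lemma polyOfVecRev_sub {n : ℕ} (c d : Fin n → F4) :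
    polyOfVecRev (c - d) = polyOfVecRev c - polyOfVecRev d := by
  simp [polyOfVecRev, Pi.sub_apply, C_sub, sub_mul, Finset.sum_sub_distrib]

lemma polyOfVecRev_zero {n : ℕ} : polyOfVecRev (0 : Fin n → F4) = 0 := by
  simp [polyOfVecRev]

lemma degree_polyOfVecRev_lt {n : ℕ} (hn : 0 < n) (c : Fin n → F4) :
    (polyOfVecRev c).degree < (n : WithBot ℕ) := by
  apply lt_of_le_of_lt (degree_sum_le _ _)
  rw [Finset.sup_lt_iff (by exact_mod_cast WithBot.bot_lt_coe n)]
  intro i _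
  apply lt_of_le_of_lt (degree_C_mul_X_pow_le _ _)
  exact_mod_cast Nat.lt_of_le_of_lt (by omega : n - 1 - (i:ℕ) ≤ n - 1) (by omega)

lemma isBinPoly_polyOfVecRev {n : ℕ} {a : Fin n → F4} (ha : IsBinVec a) :
    IsBinPoly (polyOfVecRev a) := by
  intro k
  rw [coeff_polyOfVecRev]
  split
  · exact ha _
  · exact Or.inl rfl

lemma shift_identity {n : ℕ} (hn : 0 < n) (a c : Fin n → F4) :
    polyOfVecRev (leftShift a c) =
      X * polyOfVecRev c - Polynomial.C (c ⟨0, hn⟩) * (X ^ n - polyOfVecRev a) := by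
  ext k
  simp only [coeff_sub, coeff_C_mul, coeff_X_pow, coeff_polyOfVecRev]
  rcases k with _ | k
  · rw [coeff_X_mul_zero]
    simp only [dif_pos hn]
    rw [leftShift]
    simp only
    rw [dif_neg (by omega)]
    rw [if_neg (by omega)]
    ring_nf
  · rw [coeff_X_mul, coeff_polyOfVecRev]
    by_cases h1 : k + 1 < n
    · rw [dif_pos h1, dif_pos (by omega : k < n), if_neg (by omega : ¬ (k + 1 = n)), leftShift]
      simp only
      rw [dif_pos (by omega : n - 1 - (k+1) + 1 < n), dif_pos h1]
      have e1 : (⟨n - 1 - (k+1) + 1, by omega⟩ : Fin n) = ⟨n - 1 - k, by omega⟩ :=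
        Fin.ext (by simp; omega)
      rw [e1]
      ring
    · rw [dif_neg h1]
      by_cases h2 : n = k + 1
      · rw [dif_pos (by omega : k < n), if_pos h2.symm, dif_neg h1]
        have e1 : (⟨n - 1 - k, by omega⟩ : Fin n) = ⟨0, hn⟩ := Fin.ext (by simp; omega)
        rw [e1]
        ring
      · rw [dif_neg (by omega : ¬ k < n), if_neg (by omega : ¬ (k + 1 = n)), dif_neg h1]
        ring

/-- structure theorem for additive left polycyclic codes induced
by a binary vector `a`, identified with their image in
`R̃_n = F4[x]/(x^n - ã(x))` via `c ↦ c̃(x)`: there are binary polynomials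
`g1, g2, b` of degree less than `n` such that `C` is generated as an
`F2[x]`-submodule by `α g1 + g2` and `b`, where `b` is a binary element of `C`
of minimal degree (`b = 0` if none is nonzero), `α g1 + g2` a nonbinary element
of `C` with `g1` of minimal degree among binary parts of nonbinary elements of
`C` (zero if `C` is entirely binary), `b ∣ x^n - ã(x)`, `g1 ∣ x^n - ã(x)`,
`deg g2 < deg b` when `b ≠ 0` and `g2 ≠ 0`, and
`b ∣ ((x^n - ã(x))/g1) · g2` when `b ≠ 0` and `g1 ≠ 0`. -/
theorem stmt_12 (n : ℕ) (hn : 0 < n) (a : Fin n → F4) (ha : IsBinVec a)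
    (C : AddSubgroup (Fin n → F4)) (hC : IsLeftPolycyclic a C)
    (α : F4) (hα : α ^ 2 + α + 1 = 0) :
    ∃ g1 g2 b : Polynomial F4,
      IsBinPoly g1 ∧ IsBinPoly g2 ∧ IsBinPoly b ∧
      g1.degree < (n : WithBot ℕ) ∧ g2.degree < (n : WithBot ℕ) ∧
      b.degree < (n : WithBot ℕ) ∧
      -- b is a binary element of C of minimal degree (or 0 if none)
      ((b = 0 ∧ ∀ p : Polynomial F4, IsBinPoly p → p.degree < (n : WithBot ℕ) →
          quotMkRev a p ∈ codeImageRev a C → p = 0) ∨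
       (b ≠ 0 ∧ quotMkRev a b ∈ codeImageRev a C ∧
          ∀ p : Polynomial F4, IsBinPoly p → p ≠ 0 → p.degree < (n : WithBot ℕ) →
            quotMkRev a p ∈ codeImageRev a C → b.degree ≤ p.degree)) ∧
      -- α g1 + g2 is a nonbinary element of C with g1 of minimal degree (or 0)
      ((g1 = 0 ∧ g2 = 0 ∧ ∀ h1 h2 : Polynomial F4, IsBinPoly h1 → IsBinPoly h2 →
          h1.degree < (n : WithBot ℕ) → h2.degree < (n : WithBot ℕ) →
          quotMkRev a (Polynomial.C α * h1 + h2) ∈ codeImageRev a C → h1 = 0) ∨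
       (g1 ≠ 0 ∧ quotMkRev a (Polynomial.C α * g1 + g2) ∈ codeImageRev a C ∧
          ∀ h1 h2 : Polynomial F4, IsBinPoly h1 → IsBinPoly h2 → h1 ≠ 0 →
            h1.degree < (n : WithBot ℕ) → h2.degree < (n : WithBot ℕ) →
            quotMkRev a (Polynomial.C α * h1 + h2) ∈ codeImageRev a C →
              g1.degree ≤ h1.degree)) ∧
      -- C is generated as an F2[x]-submodule by α g1 + g2 and b
      (∀ c ∈ C, ∃ q1 q2 : Polynomial F4, IsBinPoly q1 ∧ IsBinPoly q2 ∧
        quotMkRev a (polyOfVecRev c)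
          = quotMkRev a (q1 * (Polynomial.C α * g1 + g2) + q2 * b)) ∧
      (∀ q1 q2 : Polynomial F4, IsBinPoly q1 → IsBinPoly q2 →
        quotMkRev a (q1 * (Polynomial.C α * g1 + g2) + q2 * b) ∈ codeImageRev a C) ∧
      -- divisibility conditions in F2[x]
      (b ≠ 0 → ∃ q : Polynomial F4, IsBinPoly q ∧ X ^ n - polyOfVecRev a = b * q) ∧
      (g1 ≠ 0 → ∃ q : Polynomial F4, IsBinPoly q ∧ X ^ n - polyOfVecRev a = g1 * q) ∧
      (b ≠ 0 → g2 ≠ 0 → g2.degree < b.degree) ∧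
      (b ≠ 0 → g1 ≠ 0 → ∀ q : Polynomial F4, IsBinPoly q →
        q * g1 = X ^ n - polyOfVecRev a →
          ∃ r : Polynomial F4, IsBinPoly r ∧ q * g2 = b * r) := by
  classical
  set f : Polynomial F4 := X ^ n - polyOfVecRev a with hf
  set S := codeImageRev a C with hSdef
  -- basic facts about S
  have hS0 : (0 : Polynomial F4 ⧸ Ideal.span {f}) ∈ S := by
    refine ⟨0, C.zero_mem, ?_⟩
    simp [polyOfVecRev_zero, map_zero]
  have hSsub : ∀ x y, x ∈ S → y ∈ S → x - y ∈ S := by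
    rintro x y ⟨cx, hcx, rfl⟩ ⟨cy, hcy, rfl⟩
    exact ⟨cx - cy, C.sub_mem hcx hcy, by simp only [polyOfVecRev_sub, map_sub]⟩
  have hSadd : ∀ x y, x ∈ S → y ∈ S → x + y ∈ S := by
    intro x y hx hy
    have := hSsub x (0 - y) hx (hSsub 0 y hS0 hy)
    simpa using this
  have hfmk : quotMkRev a f = 0 :=
    Ideal.Quotient.eq_zero_iff_mem.2 (Ideal.subset_span rfl)
  have hSX : ∀ x ∈ S, quotMkRev a X * x ∈ S := by
    rintro x ⟨c, hc, rfl⟩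
    refine ⟨leftShift a c, hC c hc, ?_⟩
    show quotMkRev a (polyOfVecRev (leftShift a c)) = _
    rw [shift_identity hn, map_sub, map_mul, map_mul, hfmk, mul_zero, sub_zero]
  have hSmul : ∀ (q : Polynomial (ZMod 2)), ∀ x ∈ S, quotMkRev a (q.map σ4) * x ∈ S := by
    intro q
    induction q using Polynomial.induction_on with
    | C u =>
      intro x hx
      rcases zmod2_cases u with rfl | rfl
      · simpa using hS0
      · simpa using hx
    | add p q hp hq =>
      intro x hx
      rw [Polynomial.map_add, map_add, add_mul]
      exact hSadd _ _ (hp x hx) (hq x hx)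
    | monomial m u hm =>
      intro x hx
      have : (Polynomial.C u * X ^ (m + 1)).map σ4 = X * (Polynomial.C u * X ^ m).map σ4 := by
        simp only [Polynomial.map_mul, Polynomial.map_pow, map_C, map_X, pow_succ]
        ring
      rw [this, map_mul, mul_assoc]
      exact hSX _ (hm x hx)
  -- binary lift of f
  obtain ⟨abar, habar⟩ := (isBinPoly_iff _).1 (isBinPoly_polyOfVecRev ha)
  set fbar : Polynomial (ZMod 2) := X ^ n - abar with hfbar
  have hdeg_abar : abar.degree < (n : WithBot ℕ) := by
    rw [← degree_mapσ, ← habar]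
    exact degree_polyOfVecRev_lt hn a
  have hmapf : fbar.map σ4 = f := by
    rw [hfbar, Polynomial.map_sub, Polynomial.map_pow, map_X, ← habar, hf]
  have hfmonic : fbar.Monic := monic_X_pow_sub hdeg_abar
  have hfne : fbar ≠ 0 := hfmonic.ne_zero
  have hdegf : fbar.degree = (n : WithBot ℕ) := by
    rw [hfbar]
    rw [degree_sub_eq_left_of_degree_lt (by rwa [degree_X_pow]), degree_X_pow]
  -- the ideal Ib of binary members
  obtain ⟨Ib, hIbmem⟩ : ∃ Ib : Ideal (Polynomial (ZMod 2)),
      ∀ p, p ∈ Ib ↔ quotMkRev a (p.map σ4) ∈ S := by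
    refine ⟨{ carrier := {p | quotMkRev a (p.map σ4) ∈ S}
              add_mem' := ?_
              zero_mem' := ?_
              smul_mem' := ?_ }, fun p => Iff.rfl⟩
    · intro p q hp hq
      simp only [Set.mem_setOf_eq, Polynomial.map_add, map_add] at *
      exact hSadd _ _ hp hq
    · simpa using hS0
    · intro r p hp
      simp only [smul_eq_mul, Set.mem_setOf_eq, Polynomial.map_mul, map_mul] at *
      exact hSmul r _ hp
  have hfIb : fbar ∈ Ib := by
    rw [hIbmem, hmapf, hfmk]
    exact hS0
  -- the ideal Ig of binary parts of nonbinary members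
  obtain ⟨Ig, hIgmem⟩ : ∃ Ig : Ideal (Polynomial (ZMod 2)),
      ∀ p, p ∈ Ig ↔ ∃ h2 : Polynomial (ZMod 2),
        quotMkRev a (Polynomial.C α * p.map σ4 + h2.map σ4) ∈ S := by
    refine ⟨{ carrier := {p | ∃ h2 : Polynomial (ZMod 2),
                quotMkRev a (Polynomial.C α * p.map σ4 + h2.map σ4) ∈ S}
              add_mem' := ?_
              zero_mem' := ?_
              smul_mem' := ?_ }, fun p => Iff.rfl⟩
    · rintro p q ⟨hp2, hp⟩ ⟨hq2, hq⟩
      refine ⟨hp2 + hq2, ?_⟩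
      have : Polynomial.C α * ((p + q).map σ4) + (hp2 + hq2).map σ4
          = (Polynomial.C α * p.map σ4 + hp2.map σ4)
            + (Polynomial.C α * q.map σ4 + hq2.map σ4) := by
        simp only [Polynomial.map_add]; ring
      rw [this, map_add]
      exact hSadd _ _ hp hq
    · exact ⟨0, by simpa using hS0⟩
    · rintro r p ⟨h2, hp⟩
      refine ⟨r * h2, ?_⟩
      have : Polynomial.C α * ((r * p).map σ4) + (r * h2).map σ4
          = r.map σ4 * (Polynomial.C α * p.map σ4 + h2.map σ4) := by
        simp only [Polynomial.map_mul, smul_eq_mul]; ring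
      rw [smul_eq_mul, this, map_mul]
      exact hSmul r _ hp
  have hfIg : fbar ∈ Ig := by
    rw [hIgmem]
    refine ⟨0, ?_⟩
    rw [hmapf]
    simpa [hfmk] using hS0
  -- generators
  obtain ⟨bbar, hbspan'⟩ := (IsPrincipalIdealRing.principal Ib).principal
  obtain ⟨gbar, hgspan'⟩ := (IsPrincipalIdealRing.principal Ig).principal
  have hbspan : Ideal.span {bbar} = Ib := hbspan'.symm
  have hgspan : Ideal.span {gbar} = Ig := hgspan'.symm
  have hIbdvd : ∀ p, p ∈ Ib ↔ bbar ∣ p := by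
    intro p; rw [← hbspan, Ideal.mem_span_singleton]
  have hIgdvd : ∀ p, p ∈ Ig ↔ gbar ∣ p := by
    intro p; rw [← hgspan, Ideal.mem_span_singleton]
  have hbdvdf : bbar ∣ fbar := (hIbdvd fbar).1 hfIb
  have hgdvdf : gbar ∣ fbar := (hIgdvd fbar).1 hfIg
  have hbne : bbar ≠ 0 := fun h => hfne (by simpa [h] using hbdvdf)
  have hgne : gbar ≠ 0 := fun h => hfne (by simpa [h] using hgdvdf)
  have hbmonic : bbar.Monic := monic_of_ne_zero_zmod2 hbne
  have hbdegle : bbar.degree ≤ (n : WithBot ℕ) := hdegf ▸ degree_le_of_dvd hbdvdf hfne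
  have hgdegle : gbar.degree ≤ (n : WithBot ℕ) := hdegf ▸ degree_le_of_dvd hgdvdf hfne
  -- the b bundle
  obtain ⟨b, hbbin, hbdeg, hclause7, hbne0, hHb⟩ :
      ∃ b : Polynomial F4, IsBinPoly b ∧ b.degree < (n : WithBot ℕ) ∧
        ((b = 0 ∧ ∀ p : Polynomial F4, IsBinPoly p → p.degree < (n : WithBot ℕ) →
            quotMkRev a p ∈ S → p = 0) ∨
         (b ≠ 0 ∧ quotMkRev a b ∈ S ∧
            ∀ p : Polynomial F4, IsBinPoly p → p ≠ 0 → p.degree < (n : WithBot ℕ) →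
              quotMkRev a p ∈ S → b.degree ≤ p.degree)) ∧
        (b ≠ 0 → b = bbar.map σ4) ∧
        (∀ rbar, rbar ∈ Ib → ∃ q2 : Polynomial F4, IsBinPoly q2 ∧
          quotMkRev a (rbar.map σ4) = quotMkRev a (q2 * b)) := by
    by_cases hbf : fbar.degree ≤ bbar.degree
    · have hbfeq : bbar = fbar := eq_of_dvd_of_degree_le hfne hbdvdf hbf
      refine ⟨0, fun i => Or.inl (coeff_zero i), by rw [degree_zero]; exact_mod_cast WithBot.bot_lt_coe n,
        Or.inl ⟨rfl, ?_⟩, fun h => absurd rfl h, ?_⟩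
      · intro p hpbin hpdeg hpS
        obtain ⟨pbar, rfl⟩ := (isBinPoly_iff p).1 hpbin
        have hpIb : pbar ∈ Ib := (hIbmem pbar).2 hpS
        have hdvd : fbar ∣ pbar := hbfeq ▸ (hIbdvd pbar).1 hpIb
        rcases eq_or_ne pbar 0 with rfl | hpne
        · simp
        · have := degree_le_of_dvd hdvd hpne
          rw [hdegf] at this
          rw [degree_mapσ] at hpdeg
          exact absurd (this.trans_lt hpdeg) (lt_irrefl _)
      · intro rbar hr
        obtain ⟨s, rfl⟩ := hbfeq ▸ (hIbdvd rbar).1 hr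
        refine ⟨0, fun i => Or.inl (coeff_zero i), ?_⟩
        rw [hbfeq] at *
        rw [Polynomial.map_mul, hmapf, map_mul, hfmk, zero_mul, mul_zero, map_zero]
    · push_neg at hbf
      have hbdeglt : bbar.degree < (n : WithBot ℕ) := hbf.trans_le (le_of_eq hdegf)
      refine ⟨bbar.map σ4, isBinPoly_map bbar, by rwa [degree_mapσ],
        Or.inr ⟨by rwa [Ne, mapσ_eq_zero], (hIbmem bbar).1 ?_, ?_⟩, fun _ => rfl, ?_⟩
      · rw [← hbspan]; exact Ideal.subset_span rfl
      · intro p hpbin hpne hpdeg hpS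
        obtain ⟨pbar, rfl⟩ := (isBinPoly_iff p).1 hpbin
        have hpIb : pbar ∈ Ib := (hIbmem pbar).2 hpS
        have hdvd : bbar ∣ pbar := (hIbdvd pbar).1 hpIb
        rw [degree_mapσ, degree_mapσ]
        exact degree_le_of_dvd hdvd (by rwa [Ne, ← mapσ_eq_zero])
      · intro rbar hr
        obtain ⟨s, rfl⟩ := (hIbdvd rbar).1 hr
        exact ⟨s.map σ4, isBinPoly_map s, by rw [Polynomial.map_mul, mul_comm]⟩
  have hHbS : ∀ q2 : Polynomial F4, IsBinPoly q2 → quotMkRev a (q2 * b) ∈ S := by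
    intro q2 hq2
    rcases eq_or_ne b 0 with rfl | hb0
    · simpa using hS0
    · rw [hbne0 hb0]
      obtain ⟨qbar, rfl⟩ := (isBinPoly_iff q2).1 hq2
      rw [← Polynomial.map_mul]
      refine (hIbmem (qbar * bbar)).1 ?_
      rw [hIbdvd]
      exact Dvd.intro_left qbar rfl
  -- the g bundle
  obtain ⟨g1, g2, hg1bin, hg2bin, hg1deg, hg2deg, hclause8, hgS, hHg, hg1ne, hg2lt⟩ :
      ∃ g1 g2 : Polynomial F4, IsBinPoly g1 ∧ IsBinPoly g2 ∧
        g1.degree < (n : WithBot ℕ) ∧ g2.degree < (n : WithBot ℕ) ∧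
        ((g1 = 0 ∧ g2 = 0 ∧ ∀ h1 h2 : Polynomial F4, IsBinPoly h1 → IsBinPoly h2 →
            h1.degree < (n : WithBot ℕ) → h2.degree < (n : WithBot ℕ) →
            quotMkRev a (Polynomial.C α * h1 + h2) ∈ S → h1 = 0) ∨
         (g1 ≠ 0 ∧ quotMkRev a (Polynomial.C α * g1 + g2) ∈ S ∧
            ∀ h1 h2 : Polynomial F4, IsBinPoly h1 → IsBinPoly h2 → h1 ≠ 0 →
              h1.degree < (n : WithBot ℕ) → h2.degree < (n : WithBot ℕ) →
              quotMkRev a (Polynomial.C α * h1 + h2) ∈ S →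
                g1.degree ≤ h1.degree)) ∧
        quotMkRev a (Polynomial.C α * g1 + g2) ∈ S ∧
        (∀ h1bar h2bar : Polynomial (ZMod 2),
          quotMkRev a (Polynomial.C α * h1bar.map σ4 + h2bar.map σ4) ∈ S →
          ∃ (q1bar rbar : Polynomial (ZMod 2)), rbar ∈ Ib ∧
            quotMkRev a (Polynomial.C α * h1bar.map σ4 + h2bar.map σ4)
              = quotMkRev a (q1bar.map σ4 * (Polynomial.C α * g1 + g2))
                + quotMkRev a (rbar.map σ4)) ∧
        (g1 ≠ 0 → ∃ g1bar g2bar : Polynomial (ZMod 2),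
          g1 = g1bar.map σ4 ∧ g2 = g2bar.map σ4 ∧ Ideal.span {g1bar} = Ig) ∧
        (b ≠ 0 → g2 ≠ 0 → g2.degree < b.degree) := by
    by_cases hgf : fbar.degree ≤ gbar.degree
    · have hgfeq : gbar = fbar := eq_of_dvd_of_degree_le hfne hgdvdf hgf
      have hgzero : ∀ h1bar : Polynomial (ZMod 2), h1bar ∈ Ig →
          quotMkRev a (Polynomial.C α * h1bar.map σ4) = 0 := by
        intro h1bar hmem
        obtain ⟨s, rfl⟩ := hgfeq ▸ (hIgdvd h1bar).1 hmem
        rw [Polynomial.map_mul, hmapf, map_mul, map_mul, hfmk, zero_mul, mul_zero]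
      refine ⟨0, 0, fun i => Or.inl (coeff_zero i), fun i => Or.inl (coeff_zero i),
        by rw [degree_zero]; exact_mod_cast WithBot.bot_lt_coe n, by rw [degree_zero]; exact_mod_cast WithBot.bot_lt_coe n,
        Or.inl ⟨rfl, rfl, ?_⟩, by simpa using hS0, ?_, fun h => absurd rfl h,
        fun _ h => absurd rfl h⟩
      · intro h1 h2 h1bin h2bin h1deg h2deg hmem
        obtain ⟨h1bar, rfl⟩ := (isBinPoly_iff h1).1 h1bin
        obtain ⟨h2bar, rfl⟩ := (isBinPoly_iff h2).1 h2bin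
        have hIg : h1bar ∈ Ig := (hIgmem h1bar).2 ⟨h2bar, hmem⟩
        have hdvd : fbar ∣ h1bar := hgfeq ▸ (hIgdvd h1bar).1 hIg
        rcases eq_or_ne h1bar 0 with rfl | hne
        · simp
        · have := degree_le_of_dvd hdvd hne
          rw [hdegf] at this
          rw [degree_mapσ] at h1deg
          exact absurd (this.trans_lt h1deg) (lt_irrefl _)
      · intro h1bar h2bar hmem
        have hIg : h1bar ∈ Ig := (hIgmem h1bar).2 ⟨h2bar, hmem⟩
        refine ⟨0, h2bar, ?_, ?_⟩
        · refine (hIbmem h2bar).2 ?_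
          have : quotMkRev a (h2bar.map σ4)
              = quotMkRev a (Polynomial.C α * h1bar.map σ4 + h2bar.map σ4) := by
            rw [map_add, hgzero h1bar hIg, zero_add]
          rw [this]
          exact hmem
        · rw [map_add, hgzero h1bar hIg, zero_add]
          simp
    · push_neg at hgf
      have hgdeglt : gbar.degree < (n : WithBot ℕ) := hgf.trans_le (le_of_eq hdegf)
      have hgmem : gbar ∈ Ig := by rw [← hgspan]; exact Ideal.subset_span rfl
      obtain ⟨h2w, hw⟩ := (hIgmem gbar).1 hgmem
      set g2bar : Polynomial (ZMod 2) := h2w %ₘ bbar with hg2bar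
      have hg2deglt : g2bar.degree < bbar.degree := degree_modByMonic_lt h2w hbmonic
      have hmoddiv : g2bar = h2w - bbar * (h2w /ₘ bbar) := by
        rw [hg2bar, eq_sub_iff_add_eq, modByMonic_add_div h2w bbar]
      have hGS : quotMkRev a (Polynomial.C α * (gbar.map σ4) + g2bar.map σ4) ∈ S := by
        have hid : Polynomial.C α * (gbar.map σ4) + g2bar.map σ4
            = (Polynomial.C α * (gbar.map σ4) + h2w.map σ4)
              - (bbar * (h2w /ₘ bbar)).map σ4 := by
          rw [hmoddiv]
          simp only [Polynomial.map_sub, Polynomial.map_mul]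
          ring
        rw [hid, map_sub]
        refine hSsub _ _ hw ?_
        refine (hIbmem _).1 ?_
        rw [hIbdvd]
        exact Dvd.intro _ rfl
      refine ⟨gbar.map σ4, g2bar.map σ4, isBinPoly_map gbar, isBinPoly_map g2bar,
        by rwa [degree_mapσ], by rw [degree_mapσ]; exact hg2deglt.trans_le hbdegle,
        Or.inr ⟨by rwa [Ne, mapσ_eq_zero], hGS, ?_⟩, hGS, ?_,
        fun _ => ⟨gbar, g2bar, rfl, rfl, hgspan⟩, ?_⟩
      · intro h1 h2 h1bin h2bin h1ne h1deg h2deg hmem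
        obtain ⟨h1bar, rfl⟩ := (isBinPoly_iff h1).1 h1bin
        obtain ⟨h2bar, rfl⟩ := (isBinPoly_iff h2).1 h2bin
        have hIg : h1bar ∈ Ig := (hIgmem h1bar).2 ⟨h2bar, hmem⟩
        have hdvd : gbar ∣ h1bar := (hIgdvd h1bar).1 hIg
        rw [degree_mapσ, degree_mapσ]
        exact degree_le_of_dvd hdvd (by rwa [Ne, ← mapσ_eq_zero])
      · intro h1bar h2bar hmem
        have hIg : h1bar ∈ Ig := (hIgmem h1bar).2 ⟨h2bar, hmem⟩
        obtain ⟨q1bar, hq1⟩ := (hIgdvd h1bar).1 hIg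
        refine ⟨q1bar, h2bar - q1bar * g2bar, ?_, ?_⟩
        · have hid : (h2bar - q1bar * g2bar).map σ4
              = (Polynomial.C α * h1bar.map σ4 + h2bar.map σ4)
                - q1bar.map σ4 * (Polynomial.C α * (gbar.map σ4) + g2bar.map σ4) := by
            rw [hq1]
            simp only [Polynomial.map_sub, Polynomial.map_mul]
            ring
          refine (hIbmem _).2 ?_
          rw [hid, map_sub]
          refine hSsub _ _ hmem ?_
          rw [map_mul]
          exact hSmul q1bar _ hGS
        · have hid : Polynomial.C α * h1bar.map σ4 + h2bar.map σ4
              = q1bar.map σ4 * (Polynomial.C α * (gbar.map σ4) + g2bar.map σ4)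
                + (h2bar - q1bar * g2bar).map σ4 := by
            rw [hq1]
            simp only [Polynomial.map_sub, Polynomial.map_mul]
            ring
          rw [hid, map_add]
      · intro hb0 hg20
        rw [hbne0 hb0, degree_mapσ, degree_mapσ]
        exact hg2deglt
  -- assemble everything
  refine ⟨g1, g2, b, hg1bin, hg2bin, hbbin, hg1deg, hg2deg, hbdeg, hclause7, hclause8,
    ?_, ?_, ?_, ?_, hg2lt, ?_⟩
  · -- generation, forward
    intro c hc
    obtain ⟨h1bar, h2bar, hdec⟩ := decomp hα (polyOfVecRev c)
    have hmem : quotMkRev a (Polynomial.C α * h1bar.map σ4 + h2bar.map σ4) ∈ S := by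
      rw [← hdec]
      exact ⟨c, hc, rfl⟩
    obtain ⟨q1bar, rbar, hrIb, heq⟩ := hHg h1bar h2bar hmem
    obtain ⟨q2, hq2bin, heq2⟩ := hHb rbar hrIb
    refine ⟨q1bar.map σ4, q2, isBinPoly_map q1bar, hq2bin, ?_⟩
    rw [hdec, heq, heq2, ← map_add]
  · -- generation, reverse
    intro q1 q2 hq1 hq2
    rw [map_add]
    obtain ⟨q1bar, rfl⟩ := (isBinPoly_iff q1).1 hq1
    refine hSadd _ _ ?_ (hHbS q2 hq2)
    rw [map_mul]
    exact hSmul q1bar _ hgS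
  · -- b divides f
    intro hb0
    obtain ⟨qbar, hq⟩ := hbdvdf
    refine ⟨qbar.map σ4, isBinPoly_map qbar, ?_⟩
    rw [hbne0 hb0, ← Polynomial.map_mul, ← hq, hmapf]
  · -- g1 divides f
    intro hg0
    obtain ⟨g1bar, g2bar, hg1e, hg2e, hspan⟩ := hg1ne hg0
    have hdvd : g1bar ∣ fbar := by
      rw [← Ideal.mem_span_singleton, hspan]
      exact hfIg
    obtain ⟨qbar, hq⟩ := hdvd
    refine ⟨qbar.map σ4, isBinPoly_map qbar, ?_⟩
    rw [hg1e, ← Polynomial.map_mul, ← hq, hmapf]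
  · -- last divisibility condition
    intro hb0 hg0 q hqbin hq
    obtain ⟨g1bar, g2bar, hg1e, hg2e, hspan⟩ := hg1ne hg0
    obtain ⟨qbar, rfl⟩ := (isBinPoly_iff q).1 hqbin
    have hqg : qbar * g1bar = fbar := by
      apply φ_inj
      rw [Polynomial.map_mul, ← hg1e, hq, hmapf]
    have hginIg : g1bar ∈ Ig := by
      rw [← hspan]; exact Ideal.subset_span rfl
    obtain ⟨h2g, hg2S⟩ := (hIgmem g1bar).1 hginIg
    -- show q̄ * ḡ2 ∈ Ib
    have hgSmem : quotMkRev a (Polynomial.C α * g1 + g2) ∈ S := hgS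
    have hmm : quotMkRev a ((qbar * g2bar).map σ4) ∈ S := by
      have h1 : quotMkRev a (qbar.map σ4 * (Polynomial.C α * g1 + g2)) ∈ S := by
        rw [map_mul]
        exact hSmul qbar _ hgSmem
      have hkey : qbar.map σ4 * (Polynomial.C α * g1 + g2)
          = Polynomial.C α * f + (qbar * g2bar).map σ4 := by
        rw [hg1e, hg2e, ← hmapf, ← hqg]
        simp only [Polynomial.map_mul]
        ring
      rw [hkey, map_add, map_mul, hfmk, mul_zero, zero_add] at h1
      exact h1
    have hdvd2 : bbar ∣ qbar * g2bar := (hIbdvd _).1 ((hIbmem _).2 hmm)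
    obtain ⟨rbar, hr⟩ := hdvd2
    refine ⟨rbar.map σ4, isBinPoly_map rbar, ?_⟩
    rw [hg2e, ← Polynomial.map_mul, hr, Polynomial.map_mul, hbne0 hb0]
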